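/- Let Γ be an n-space group, let Z(Γ) be its center, let V = Span(Z(Γ)), and let N = {b+B ∈ Γ : b ∈ V^⊥ and V ⊆ Fix(B)} be the kernel of the action of Γ on V; assume Span(N) = V^⊥ (so that N is the orthogonal dual Z(Γ)^⊥). Then there exists a subgroup Σ of Γ with Γ = Z(Γ)Σ and Z(Γ) ∩ Σ = {I} (that is, the space group extension 1 → Z(Γ) → Γ → Γ/Z(Γ) → 1 splits) if and only if Γ = Z(Γ)N (that is, the structure group Γ/Z(Γ)N is trivial). -/

import Mathlib

noncomputable section

abbrev Euc (n : ℕ) : Type := EuclideanSpace ℝ (Fin n)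

abbrev AffG (n : ℕ) : Type := Euc n ≃ᵃ[ℝ] Euc n

/-- The translation `x ↦ a + x` as an affinity of `Eⁿ`. -/
def transl {n : ℕ} (a : Euc n) : AffG n := AffineEquiv.constVAdd ℝ (Euc n) a

/-- `Span(H)` : the linear span of the translation vectors of `H`. -/
def spanOf {n : ℕ} (H : Subgroup (AffG n)) : Submodule ℝ (Euc n) :=
  Submodule.span ℝ {a : Euc n | transl a ∈ H}

/-- An `n`-space group: a group of isometries acting properly discontinuously
and cocompactly on `Eⁿ`. -/
def IsSpaceGroup {n : ℕ} (Γ : Subgroup (AffG n)) : Prop :=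
  (∀ f ∈ Γ, Isometry (⇑f)) ∧
  (∀ K : Set (Euc n), IsCompact K →
    {γ : AffG n | γ ∈ Γ ∧ ((⇑γ '' K) ∩ K).Nonempty}.Finite) ∧
  (∃ K : Set (Euc n), IsCompact K ∧ ∀ x : Euc n, ∃ γ ∈ Γ, γ x ∈ K)

/-- `N` is a complete normal subgroup of `Γ`:  it is normal in `Γ` and
equals `{a+A ∈ Γ : a ∈ V ∧ V^⊥ ⊆ Fix A}` where `V = Span N`
(for `f = a + A` we have `a = f 0` and `A = f.linear`). -/
def IsCompleteNormal {n : ℕ} (N Γ : Subgroup (AffG n)) : Prop :=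
  N ≤ Γ ∧ (∀ γ ∈ Γ, ∀ ν ∈ N, γ * ν * γ⁻¹ ∈ N) ∧
  (∀ f : AffG n, f ∈ N ↔
    f ∈ Γ ∧ f 0 ∈ spanOf N ∧ ∀ x ∈ (spanOf N)ᗮ, f.linear x = x)

/-- Membership in the kernel `K = {b+B ∈ Γ : b ∈ V^⊥ ∧ V ⊆ Fix B}`
of the action of `Γ` on `V`. -/
def InKernel {n : ℕ} (Γ : Subgroup (AffG n)) (V : Submodule ℝ (Euc n)) (f : AffG n) : Prop :=
  f ∈ Γ ∧ f 0 ∈ Vᗮ ∧ ∀ x ∈ V, f.linear x = x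

end


noncomputable section
set_option linter.unusedSectionVars false
set_option linter.unusedVariables false
namespace SG

variable {n : ℕ}

lemma mul_apply (f g : AffG n) (x : Euc n) : (f * g) x = f (g x) := rfl
lemma one_apply (x : Euc n) : (1 : AffG n) x = x := rfl
lemma transl_apply (a x : Euc n) : transl a x = a + x := rfl
lemma transl_add (a b : Euc n) : transl (a + b) = transl a * transl b := by
  ext x; simp [transl_apply, mul_apply, add_assoc]
lemma transl_zero : transl (0 : Euc n) = 1 := by ext x; simp [transl_apply, one_apply]
lemma transl_inj : Function.Injective (transl (n := n)) := by
  intro a b h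
  have := congrArg (fun f : AffG n => f 0) h
  simpa [transl_apply] using this
lemma linear_mul (f g : AffG n) : (f * g).linear = f.linear * g.linear := rfl
lemma apply_eq (f : AffG n) (x : Euc n) : f x = f.linear x + f 0 := by
  have := f.map_vadd 0 x
  simpa [vadd_eq_add, add_comm] using this
lemma transl_linear (a : Euc n) : (transl a).linear = 1 := rfl

lemma norm_linear (f : AffG n) (hf : Isometry (⇑f)) (x : Euc n) : ‖f.linear x‖ = ‖x‖ := by
  have h : f.linear x = f x - f 0 := by rw [apply_eq]; abel
  rw [h]
  have := hf.dist_eq x 0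
  simpa [dist_eq_norm] using this

open scoped RealInnerProductSpace

lemma inner_linear (f : AffG n) (hf : Isometry (⇑f)) (x y : Euc n) :
    ⟪f.linear x, f.linear y⟫ = ⟪x, y⟫ := by
  let g : Euc n →ₗ[ℝ] Euc n := f.linear.toLinearMap
  have hg : ∀ x, ‖g x‖ = ‖x‖ := norm_linear f hf
  let li : Euc n →ₗᵢ[ℝ] Euc n := { toLinearMap := g, norm_map' := hg }
  exact li.inner_map_map x y

lemma apply_zero_of_mul (f g : AffG n) : (f * g) 0 = f.linear (g 0) + f 0 := by
  rw [mul_apply, apply_eq]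

/-- the two commutation identities -/
lemma comm_eq₁ (f γ : AffG n) (h : f * γ = γ * f) :
    f.linear (γ 0) + f 0 = γ.linear (f 0) + γ 0 := by
  have := congrArg (fun g : AffG n => g 0) h
  simpa [apply_zero_of_mul] using this

lemma comm_eq₂ (f γ : AffG n) (h : f * γ = γ * f) (x : Euc n) :
    f.linear (γ.linear x) = γ.linear (f.linear x) := by
  have h1 : f (γ x) = γ (f x) := by rw [← mul_apply, h, mul_apply]
  rw [apply_eq γ x, apply_eq f x, apply_eq f (γ.linear x + γ 0),
    apply_eq γ (f.linear x + f 0), map_add, map_add] at h1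
  have h0 := comm_eq₁ f γ h
  linear_combination (norm := module) h1 - h0

/-- A central element of a space group is a translation. -/
lemma central_linear_eq_id (Γ Z : Subgroup (AffG n)) (hΓ : IsSpaceGroup Γ)
    (hZ : ∀ f : AffG n, f ∈ Z ↔ f ∈ Γ ∧ ∀ γ ∈ Γ, f * γ = γ * f)
    (f : AffG n) (hf : f ∈ Z) (u : Euc n) : f.linear u = u := by
  obtain ⟨hfΓ, hcomm⟩ := (hZ f).mp hf
  by_contra hne
  obtain ⟨K, hK, hcover⟩ := hΓ.2.2
  obtain ⟨R, hR⟩ : ∃ R : ℝ, ∀ k ∈ K, ‖k‖ ≤ R := by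
    obtain ⟨r, hr⟩ := hK.isBounded.subset_closedBall 0
    exact ⟨r, fun k hk => by simpa using hr hk⟩
  set a := f 0 with ha
  set ε := ‖f.linear u - u‖ with hε
  have hεpos : 0 < ε := by
    simp only [hε, norm_pos_iff, sub_ne_zero]; exact hne
  obtain ⟨t, ht⟩ := exists_nat_gt ((2 * R + 2 * ‖a‖) / ε)
  obtain ⟨γ, hγΓ, hγK⟩ := hcover ((t : ℝ) • u)
  have hcm := hcomm γ hγΓ
  set c := γ 0 with hc
  set k := γ ((t : ℝ) • u) with hk2
  have hkK : k ∈ K := hγK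
  have hkeq : k = γ.linear ((t : ℝ) • u) + c := apply_eq γ _
  -- F c - c = C a - a
  have h1 : f.linear c - c = γ.linear a - a := by
    have := comm_eq₁ f γ hcm
    rw [← ha, ← hc] at this
    linear_combination (norm := module) this
  have h2 : f.linear k - k = (t : ℝ) • γ.linear (f.linear u - u) + (f.linear c - c) := by
    have hfc : f.linear (γ.linear ((t : ℝ) • u)) = (t : ℝ) • γ.linear (f.linear u) := by
      rw [map_smul, map_smul, comm_eq₂ f γ hcm u]
    rw [hkeq, map_add, hfc, map_smul, map_sub]
    module
  have hnorm : (t : ℝ) * ε = ‖(t : ℝ) • γ.linear (f.linear u - u)‖ := by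
    rw [norm_smul, norm_linear γ (hΓ.1 γ hγΓ), Real.norm_natCast]
  have hbound : (t : ℝ) * ε ≤ 2 * R + 2 * ‖a‖ := by
    rw [hnorm]
    have : (t : ℝ) • γ.linear (f.linear u - u) = (f.linear k - k) - (f.linear c - c) := by
      rw [h2]; abel
    rw [this, h1]
    have hk1 : ‖f.linear k‖ = ‖k‖ := norm_linear f (hΓ.1 f hfΓ) k
    have hCa : ‖γ.linear a‖ = ‖a‖ := norm_linear γ (hΓ.1 γ hγΓ) a
    calc ‖f.linear k - k - (γ.linear a - a)‖
        ≤ ‖f.linear k - k‖ + ‖γ.linear a - a‖ := norm_sub_le _ _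
      _ ≤ (‖f.linear k‖ + ‖k‖) + (‖γ.linear a‖ + ‖a‖) := by
          gcongr <;> [exact norm_sub_le _ _; exact norm_sub_le _ _]
      _ ≤ (R + R) + (‖a‖ + ‖a‖) := by
          rw [hk1, hCa]; have := hR k hkK; gcongr
      _ = 2 * R + 2 * ‖a‖ := by ring
  have : (2 * R + 2 * ‖a‖) / ε < (t : ℝ) := ht
  rw [div_lt_iff₀ hεpos] at this
  linarith


/-- an affine equivalence with identity linear part is a translation -/
lemma eq_transl_of_linear_id (f : AffG n) (h : ∀ x, f.linear x = x) : f = transl (f 0) := by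
  ext x
  rw [apply_eq f x, h x, transl_apply, add_comm]


/-- the linear fix set as a submodule -/
def fixSub (L : Euc n ≃ₗ[ℝ] Euc n) : Submodule ℝ (Euc n) where
  carrier := {x | L x = x}
  add_mem' := by intro a b ha hb; simp only [Set.mem_setOf_eq, map_add] at *; rw [ha, hb]
  zero_mem' := by simp
  smul_mem' := by intro r a ha; simp only [Set.mem_setOf_eq, map_smul] at *; rw [ha]

lemma fix_span {L : Euc n ≃ₗ[ℝ] Euc n} {S : Set (Euc n)} (h : ∀ a ∈ S, L a = a)
    {x : Euc n} (hx : x ∈ Submodule.span ℝ S) : L x = x := by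
  have : Submodule.span ℝ S ≤ fixSub L := Submodule.span_le.mpr h
  exact this hx


lemma conj_transl (γ : AffG n) (w : Euc n) : γ * transl w * γ⁻¹ = transl (γ.linear w) := by
  refine AffineEquiv.ext fun x => ?_
  have h1 : γ (γ⁻¹ x) = x := by rw [← mul_apply, mul_inv_cancel, one_apply]
  rw [apply_eq γ (γ⁻¹ x)] at h1
  show γ (transl w (γ⁻¹ x)) = transl (γ.linear w) x
  rw [transl_apply, transl_apply, apply_eq γ (w + γ⁻¹ x), map_add]
  linear_combination (norm := module) h1

lemma proj_eq_of_fix (V : Submodule ℝ (Euc n)) (L : Euc n ≃ₗ[ℝ] Euc n)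
    (hinner : ∀ x y : Euc n, ⟪L x, L y⟫ = ⟪x, y⟫) (hfix : ∀ v ∈ V, L v = v) (y : Euc n) :
    (V.orthogonalProjectionOnto (L y) : Euc n) = V.orthogonalProjectionOnto y := by
  have hLw : ∀ w ∈ Vᗮ, L w ∈ Vᗮ := by
    intro w hw
    rw [Submodule.mem_orthogonal]
    intro v hv
    have h := hinner w v
    rw [hfix v hv] at h
    have hw0 : inner ℝ v w = (0 : ℝ) := (Submodule.mem_orthogonal V w).mp hw v hv
    rw [real_inner_comm, h, real_inner_comm]
    exact hw0
  have horth : L y - y ∈ Vᗮ := by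
    set p := (V.orthogonalProjectionOnto y : Euc n) with hp
    have hyp : y - p ∈ Vᗮ := Submodule.sub_starProjection_mem_orthogonal (K := V) y
    have h1 : L y - y = L (y - p) - (y - p) := by
      rw [map_sub, hfix p (V.orthogonalProjectionOnto y).2]
      module
    rw [h1]
    exact Submodule.sub_mem _ (hLw _ hyp) hyp
  have h0 : V.orthogonalProjectionOnto (L y - y) = 0 := Submodule.orthogonalProjectionOnto_eq_zero_iff.mpr horth
  rw [map_sub] at h0
  have := sub_eq_zero.mp h0
  exact_mod_cast congrArg (Subtype.val) this

lemma finite_transl (Γ : Subgroup (AffG n)) (hΓ : IsSpaceGroup Γ) (R : ℝ) :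
    {d : Euc n | transl d ∈ Γ ∧ ‖d‖ ≤ R}.Finite := by
  have hfin := hΓ.2.1 (Metric.closedBall 0 R) (isCompact_closedBall 0 R)
  apply Set.Finite.subset (hfin.preimage (transl_inj.injOn))
  intro d hd
  refine ⟨hd.1, ⟨d, ⟨0, ?_, ?_⟩, ?_⟩⟩
  · simp only [Metric.mem_closedBall, dist_zero_right, norm_zero]
    exact le_trans (norm_nonneg d) hd.2
  · simp [transl_apply]
  · simp only [Metric.mem_closedBall, dist_zero_right]
    exact hd.2

lemma exists_finset_span_top (S : Set (Euc n)) (hS : Submodule.span ℝ S = ⊤) :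
    ∃ T : Finset (Euc n), ↑T ⊆ S ∧ Submodule.span ℝ (T : Set (Euc n)) = ⊤ := by
  classical
  have hfg : (⊤ : Submodule ℝ (Euc n)).FG := Module.Finite.fg_top
  have hc := (Submodule.fg_iff_compact _).mp hfg
  have hle : (⊤ : Submodule ℝ (Euc n)) ≤ ⨆ s : S, Submodule.span ℝ {(s : Euc n)} := by
    rw [← hS, Submodule.span_le]
    intro x hx
    exact le_iSup (fun s : S => Submodule.span ℝ {(s : Euc n)}) ⟨x, hx⟩
      (Submodule.mem_span_singleton_self x)
  obtain ⟨t, ht⟩ := CompleteLattice.IsCompactElement.exists_finset_of_le_iSup _ hc _ hle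
  refine ⟨t.image Subtype.val, ?_, ?_⟩
  · intro x hx
    simp only [Finset.coe_image, Set.mem_image] at hx
    obtain ⟨⟨y, hy⟩, _, rfl⟩ := hx
    exact hy
  · apply le_antisymm le_top
    refine le_trans ht ?_
    apply iSup_le; intro i; apply iSup_le; intro hi
    rw [Submodule.span_le, Set.singleton_subset_iff]
    apply Submodule.subset_span
    simp only [Finset.coe_image, Set.mem_image]
    exact ⟨i, hi, rfl⟩


open scoped RealInnerProductSpace

variable {n : ℕ}

lemma linear_pow' (γ : AffG n) (j : ℕ) : (γ ^ j).linear = γ.linear ^ j := by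
  induction j with
  | zero => rfl
  | succ k ih => rw [pow_succ, pow_succ, ← ih]; rfl

section Ctx

variable (Γ Z : Subgroup (AffG n))
variable (hΓ : IsSpaceGroup Γ)
variable (hZ : ∀ f : AffG n, f ∈ Z ↔ f ∈ Γ ∧ ∀ γ ∈ Γ, f * γ = γ * f)

include hΓ hZ

lemma central_vec_fixed {f : AffG n} (hf : f ∈ Z) {γ : AffG n} (hγ : γ ∈ Γ) :
    γ.linear (f 0) = f 0 := by
  have hcm := ((hZ f).mp hf).2 γ hγ
  have h := comm_eq₁ f γ hcm
  rw [central_linear_eq_id Γ Z hΓ hZ f hf (γ 0)] at h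
  linear_combination (norm := module) -h

lemma fix_V {γ : AffG n} (hγ : γ ∈ Γ) {v : Euc n} (hv : v ∈ spanOf Z) :
    γ.linear v = v := by
  refine fix_span (fun a ha => ?_) hv
  have h0 : (transl a) 0 = a := by simp [transl_apply]
  rw [← h0]
  exact central_vec_fixed Γ Z hΓ hZ ha hγ

lemma transl_central_of_fixed {b : Euc n} (hmem : transl b ∈ Γ)
    (hfix : ∀ γ ∈ Γ, γ.linear b = b) : transl b ∈ Z := by
  refine (hZ _).mpr ⟨hmem, fun γ hγ => ?_⟩
  refine AffineEquiv.ext fun x => ?_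
  show transl b (γ x) = γ (transl b x)
  rw [transl_apply, transl_apply, apply_eq γ (b + x), map_add, hfix γ hγ, apply_eq γ x]
  abel

lemma mem_Z_of_transl {v : Euc n} (hv : v ∈ spanOf Z) (hmem : transl v ∈ Γ) :
    transl v ∈ Z :=
  transl_central_of_fixed Γ Z hΓ hZ hmem (fun γ hγ => fix_V Γ Z hΓ hZ hγ hv)

end Ctx

section Ctx2

variable (Γ Z N : Subgroup (AffG n))
variable (hΓ : IsSpaceGroup Γ)
variable (hZ : ∀ f : AffG n, f ∈ Z ↔ f ∈ Γ ∧ ∀ γ ∈ Γ, f * γ = γ * f)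
variable (hN : ∀ f : AffG n, f ∈ N ↔ InKernel Γ (spanOf Z) f)
variable (hdual : spanOf N = (spanOf Z)ᗮ)

include hΓ hZ hN hdual

lemma pg_finite : {L : Euc n ≃ₗ[ℝ] Euc n | ∃ γ ∈ Γ, γ.linear = L}.Finite := by
  classical
  have hZΓ : Z ≤ Γ := fun z hz => ((hZ z).mp hz).1
  have hNΓ : N ≤ Γ := fun g hg => ((hN g).mp hg).1
  -- spanning set
  have hspan : Submodule.span ℝ ({a : Euc n | transl a ∈ Z} ∪ {w : Euc n | transl w ∈ N}) = ⊤ := by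
    rw [Submodule.span_union]
    show spanOf Z ⊔ spanOf N = ⊤
    rw [hdual]
    exact Submodule.sup_orthogonal_of_hasOrthogonalProjection
  obtain ⟨T, hTsub, hTspan⟩ := exists_finset_span_top _ hspan
  set PS := {L : Euc n ≃ₗ[ℝ] Euc n | ∃ γ ∈ Γ, γ.linear = L} with hPS
  set D : Euc n → Set (Euc n) := fun t => insert t {e | transl e ∈ Γ ∧ ‖e‖ ≤ ‖t‖} with hD
  have hDfin : ∀ t, (D t).Finite := fun t => (finite_transl Γ hΓ ‖t‖).insert t
  have hmemD : ∀ L ∈ PS, ∀ t ∈ T, L t ∈ D t := by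
    rintro L ⟨γ, hγ, rfl⟩ t ht
    rcases hTsub ht with h | h
    · left
      exact fix_V Γ Z hΓ hZ hγ (Submodule.subset_span h)
    · right
      constructor
      · rw [← conj_transl γ t]
        exact mul_mem (mul_mem hγ (hNΓ h)) (inv_mem hγ)
      · exact le_of_eq (norm_linear γ (hΓ.1 γ hγ) t)
  set Φ : (Euc n ≃ₗ[ℝ] Euc n) → ({x // x ∈ T} → Euc n) := fun L t => L ↑t with hΦ
  have hinj : Set.InjOn Φ PS := by
    intro L hL L' hL' hEq
    have : (L : Euc n →ₗ[ℝ] Euc n) = (L' : Euc n →ₗ[ℝ] Euc n) := by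
      apply LinearMap.ext_on hTspan
      intro x hx
      exact congrFun hEq ⟨x, hx⟩
    exact LinearEquiv.toLinearMap_injective this
  have hpi : (Set.pi Set.univ fun t : {x // x ∈ T} => D ↑t).Finite :=
    Set.Finite.pi fun t => hDfin ↑t
  have himg : Φ '' PS ⊆ Set.pi Set.univ fun t : {x // x ∈ T} => D ↑t := by
    rintro _ ⟨L, hL, rfl⟩
    intro t _
    exact hmemD L hL ↑t t.2
  exact Set.Finite.of_finite_image (hpi.subset himg) hinj

lemma exists_pow_linear_id {γ : AffG n} (hγ : γ ∈ Γ) :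
    ∃ m : ℕ, 0 < m ∧ γ.linear ^ m = 1 := by
  have hmem : ∀ j : ℕ, (γ ^ j).linear ∈ {L : Euc n ≃ₗ[ℝ] Euc n | ∃ γ ∈ Γ, γ.linear = L} :=
    fun j => ⟨γ ^ j, pow_mem hγ j, rfl⟩
  obtain ⟨i, j, hij, heq⟩ := Set.Finite.exists_lt_map_eq_of_forall_mem hmem
    (pg_finite Γ Z N hΓ hZ hN hdual)
  refine ⟨j - i, Nat.sub_pos_of_lt hij, ?_⟩
  have h1 : γ.linear ^ (j - i) * γ.linear ^ i = 1 * γ.linear ^ i := by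
    rw [one_mul, ← pow_add, Nat.sub_add_cancel hij.le, ← linear_pow', ← linear_pow', ← heq]
  exact mul_right_cancel h1

end Ctx2

lemma sup_decomp (Z Sg : Subgroup (AffG n))
    (hcomm : ∀ z ∈ Z, ∀ s ∈ Sg, z * s = s * z) :
    ∀ g ∈ Z ⊔ Sg, ∃ z ∈ Z, ∃ s ∈ Sg, g = z * s := by
  intro g hg
  let W : Subgroup (AffG n) :=
    { carrier := {g | ∃ z ∈ Z, ∃ s ∈ Sg, g = z * s}
      one_mem' := ⟨1, one_mem _, 1, one_mem _, (one_mul 1).symm⟩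
      mul_mem' := by
        rintro a b ⟨z, hz, s, hs, rfl⟩ ⟨z', hz', s', hs', rfl⟩
        refine ⟨z * z', mul_mem hz hz', s * s', mul_mem hs hs', ?_⟩
        have h : s * z' = z' * s := (hcomm z' hz' s hs).symm
        calc z * s * (z' * s') = z * (s * z') * s' := by group
          _ = z * (z' * s) * s' := by rw [h]
          _ = z * z' * (s * s') := by group
      inv_mem' := by
        rintro a ⟨z, hz, s, hs, rfl⟩
        refine ⟨z⁻¹, inv_mem hz, s⁻¹, inv_mem hs, ?_⟩
        have h : z⁻¹ * s⁻¹ = s⁻¹ * z⁻¹ := hcomm _ (inv_mem hz) _ (inv_mem hs)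
        rw [mul_inv_rev, h] }
  have hle : Z ⊔ Sg ≤ W :=
    sup_le (fun z hz => ⟨z, hz, 1, one_mem _, (mul_one z).symm⟩)
      (fun s hs => ⟨1, one_mem _, s, hs, (one_mul s).symm⟩)
  exact hle hg


open scoped RealInnerProductSpace

variable {n : ℕ}

lemma transl_sum_mem (G : Subgroup (AffG n)) (F : Finset (Euc n))
    (h : ∀ e ∈ F, transl e ∈ G) : transl (∑ e ∈ F, e) ∈ G := by
  classical
  induction F using Finset.induction with
  | empty => simpa [transl_zero] using one_mem G
  | @insert a s hnot ih =>
    rw [Finset.sum_insert hnot, transl_add]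
    exact mul_mem (h a (Finset.mem_insert_self a s))
      (ih fun e he => h e (Finset.mem_insert_of_mem he))

theorem stmt5' {n : ℕ} (Γ Z N : Subgroup (AffG n)) (hΓ : IsSpaceGroup Γ)
    (hZ : ∀ f : AffG n, f ∈ Z ↔ f ∈ Γ ∧ ∀ γ ∈ Γ, f * γ = γ * f)
    (hN : ∀ f : AffG n, f ∈ N ↔ InKernel Γ (spanOf Z) f)
    (hdual : spanOf N = (spanOf Z)ᗮ) :
    (∃ Sg : Subgroup (AffG n), Sg ≤ Γ ∧ Z ⊔ Sg = Γ ∧ Z ⊓ Sg = ⊥) ↔ Z ⊔ N = Γ := by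
  classical
  have hZΓ : Z ≤ Γ := fun z hz => ((hZ z).mp hz).1
  have hNΓ : N ≤ Γ := fun g hg => ((hN g).mp hg).1
  set V := spanOf Z with hV
  set prV : Euc n →ₗ[ℝ] Euc n := V.subtype.comp (V.orthogonalProjectionOnto).toLinearMap with hprV
  have hprV_apply : ∀ x : Euc n, prV x = (V.orthogonalProjectionOnto x : Euc n) := fun x => rfl
  constructor
  · rintro ⟨Sg, hSgΓ, hsup, hinf⟩
    apply le_antisymm (sup_le hZΓ hNΓ)
    intro γ hγ
    have hcomm : ∀ z ∈ Z, ∀ s ∈ Sg, z * s = s * z :=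
      fun z hz s hs => ((hZ z).mp hz).2 s (hSgΓ hs)
    obtain ⟨z, hz, s, hs, rfl⟩ := sup_decomp Z Sg hcomm γ (hsup ▸ hγ)
    refine mul_mem ((le_sup_left : Z ≤ Z ⊔ N) hz) ((le_sup_right : N ≤ Z ⊔ N) ?_)
    -- show s ∈ N
    have hSgnorm : ∀ g ∈ Γ, ∀ t ∈ Sg, g * t * g⁻¹ ∈ Sg := by
      intro g hg t ht
      obtain ⟨z', hz', s', hs', rfl⟩ := sup_decomp Z Sg hcomm g (hsup ▸ hg)
      have hmem : s' * t * s'⁻¹ ∈ Sg := mul_mem (mul_mem hs' ht) (inv_mem hs')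
      have hc : z' * (s' * t * s'⁻¹) = (s' * t * s'⁻¹) * z' := hcomm z' hz' _ hmem
      have h1 : z' * s' * t * (z' * s')⁻¹ = z' * (s' * t * s'⁻¹) * z'⁻¹ := by group
      have h2 : z' * (s' * t * s'⁻¹) * z'⁻¹ = s' * t * s'⁻¹ := by
        rw [hc, mul_assoc, mul_inv_cancel, mul_one]
      rw [h1, h2]; exact hmem
    -- key : translations in Sg project to 0 in V
    have hkey : ∀ d : Euc n, transl d ∈ Sg → prV d = 0 := by
      intro d hd
      set S : Set (Euc n) := {e | ∃ g ∈ Γ, g.linear d = e} with hS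
      have hdS : d ∈ S := ⟨1, one_mem Γ, rfl⟩
      have hSfin : S.Finite := by
        apply (finite_transl Γ hΓ ‖d‖).subset
        rintro e ⟨g, hg, rfl⟩
        constructor
        · rw [← conj_transl g d]
          exact mul_mem (mul_mem hg (hSgΓ hd)) (inv_mem hg)
        · exact le_of_eq (norm_linear g (hΓ.1 g hg) d)
      have hSSg : ∀ e ∈ S, transl e ∈ Sg := by
        rintro e ⟨g, hg, rfl⟩
        rw [← conj_transl g d]
        exact hSgnorm g hg _ hd
      set F := hSfin.toFinset with hF
      set b := ∑ e ∈ F, e with hb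
      have hbSg : transl b ∈ Sg :=
        transl_sum_mem Sg F (fun e he => hSSg e (hSfin.mem_toFinset.mp he))
      have hbfix : ∀ g ∈ Γ, g.linear b = b := by
        intro g hg
        have hmapS : ∀ e ∈ S, ∀ g' ∈ Γ, g'.linear e ∈ S := by
          rintro e ⟨g0, hg0, rfl⟩ g' hg'
          refine ⟨g' * g0, mul_mem hg' hg0, ?_⟩
          rw [linear_mul]; rfl
        have hinv : ∀ x : Euc n, (g⁻¹).linear (g.linear x) = x := by
          intro x
          have h1 : ((g⁻¹ * g).linear) x = x := by rw [inv_mul_cancel]; rfl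
          rw [linear_mul] at h1; exact h1
        have hinv' : ∀ x : Euc n, g.linear ((g⁻¹).linear x) = x := by
          intro x
          have h1 : ((g * g⁻¹).linear) x = x := by rw [mul_inv_cancel]; rfl
          rw [linear_mul] at h1; exact h1
        have hsum : ∑ e ∈ F, g.linear e = ∑ e ∈ F, e := by
          refine Finset.sum_nbij' (i := fun e => g.linear e) (j := fun e => (g⁻¹).linear e)
            ?_ ?_ ?_ ?_ ?_
          · intro a ha
            exact hSfin.mem_toFinset.mpr (hmapS a (hSfin.mem_toFinset.mp ha) g hg)
          · intro a ha
            exact hSfin.mem_toFinset.mpr (hmapS a (hSfin.mem_toFinset.mp ha) g⁻¹ (inv_mem hg))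
          · intro a _; exact hinv a
          · intro a _; exact hinv' a
          · intro a _; rfl
        rw [hb, map_sum, hsum]
      have hbZ : transl b ∈ Z := transl_central_of_fixed Γ Z hΓ hZ (hSgΓ hbSg) hbfix
      have hbbot : transl b ∈ Z ⊓ Sg := ⟨hbZ, hbSg⟩
      rw [hinf] at hbbot
      have hb0 : b = 0 := by
        apply transl_inj
        rw [Subgroup.mem_bot.mp hbbot, transl_zero]
      have hpre : ∀ e ∈ F, prV e = prV d := by
        intro e he
        obtain ⟨g, hg, rfl⟩ := hSfin.mem_toFinset.mp he
        exact proj_eq_of_fix V g.linear (inner_linear g (hΓ.1 g hg))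
          (fun v hv => fix_V Γ Z hΓ hZ hg hv) d
      have hsum2 : prV b = (F.card) • prV d := by
        rw [hb, map_sum, Finset.sum_congr rfl hpre, Finset.sum_const]
      rw [hb0, map_zero] at hsum2
      have hcard : 0 < F.card := Finset.card_pos.mpr ⟨d, hSfin.mem_toFinset.mpr hdS⟩
      have hsm : ((F.card : ℝ)) • prV d = 0 := by
        rw [Nat.cast_smul_eq_nsmul ℝ]; exact hsum2.symm
      exact (smul_eq_zero.mp hsm).resolve_left (Nat.cast_ne_zero.mpr hcard.ne')
    -- finish : s ∈ N
    obtain ⟨m, hm, hml⟩ := exists_pow_linear_id Γ Z N hΓ hZ hN hdual (hSgΓ hs)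
    have hτlin : ∀ x, (s ^ m).linear x = x := by
      intro x; rw [linear_pow', hml]; rfl
    have hτ : s ^ m = transl ((s ^ m) 0) := eq_transl_of_linear_id _ hτlin
    have hτSg : transl ((s ^ m) 0) ∈ Sg := hτ ▸ pow_mem hs m
    have hproj0 : prV ((s ^ m) 0) = 0 := hkey _ hτSg
    have hiter : ∀ j : ℕ, prV ((s ^ j) 0) = (j : ℝ) • prV (s 0) := by
      intro j
      induction j with
      | zero =>
        have h1 : (s ^ 0) 0 = 0 := by rw [pow_zero]; rfl
        rw [h1, map_zero, Nat.cast_zero, zero_smul]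
      | succ k ih =>
        have h1 : (s ^ (k + 1)) 0 = s.linear ((s ^ k) 0) + s 0 := by
          rw [pow_succ']
          exact apply_zero_of_mul s (s ^ k)
        have h2 : prV (s.linear ((s ^ k) 0)) = prV ((s ^ k) 0) :=
          proj_eq_of_fix V s.linear (inner_linear s (hΓ.1 s (hSgΓ hs)))
            (fun v hv => fix_V Γ Z hΓ hZ (hSgΓ hs) hv) _
        rw [h1, map_add, h2, ih, Nat.cast_succ, add_smul, one_smul]
    have hs0 : prV (s 0) = 0 := by
      have := hiter m
      rw [hproj0] at this
      have hm0 : ((m : ℝ)) ≠ 0 := Nat.cast_ne_zero.mpr hm.ne'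
      exact (smul_eq_zero.mp this.symm).resolve_left hm0
    refine (hN s).mpr ⟨hSgΓ hs, ?_, fun x hx => fix_V Γ Z hΓ hZ (hSgΓ hs) hx⟩
    have hproj : V.orthogonalProjectionOnto (s 0) = 0 := by
      apply Subtype.ext
      rw [ZeroMemClass.coe_zero]
      exact hs0
    exact Submodule.orthogonalProjectionOnto_eq_zero_iff.mp hproj
  · intro hZN
    refine ⟨N, hNΓ, hZN, ?_⟩
    rw [eq_bot_iff]
    rintro f ⟨hfZ, hfN⟩
    obtain ⟨hfΓ, hf0, hfixV⟩ := (hN f).mp hfN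
    have hcm : ∀ γ ∈ Γ, f * γ = γ * f := ((hZ f).mp hfZ).2
    have hfixO : ∀ x ∈ Vᗮ, f.linear x = x := by
      intro x hx
      rw [← hdual] at hx
      refine fix_span (fun w hw => ?_) hx
      have hcmw := hcm (transl w) (hNΓ hw)
      have h := comm_eq₁ f (transl w) hcmw
      have h1 : (transl w) 0 = w := by simp [transl_apply]
      have h2 : (transl w).linear (f 0) = f 0 := rfl
      rw [h1, h2] at h
      linear_combination (norm := module) h
    have hlinid : ∀ x, f.linear x = x := by
      intro x
      have hx1 : (V.orthogonalProjectionOnto x : Euc n) ∈ V := Submodule.coe_mem _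
      have hx2 : x - (V.orthogonalProjectionOnto x : Euc n) ∈ Vᗮ :=
        Submodule.sub_starProjection_mem_orthogonal (K := V) x
      have e1 := hfixV _ hx1
      have e2 := hfixO _ hx2
      have : f.linear ((V.orthogonalProjectionOnto x : Euc n)
          + (x - (V.orthogonalProjectionOnto x : Euc n))) = x := by
        rw [map_add, e1, e2]; abel
      rwa [add_sub_cancel] at this
    have hft : f = transl (f 0) := eq_transl_of_linear_id f hlinid
    have hf0V : f 0 ∈ V := by
      apply Submodule.subset_span
      show transl (f 0) ∈ Z
      rw [← hft]; exact hfZ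
    have hf00 : f 0 = 0 := by
      have hd := (V.orthogonal_disjoint).le_bot (x := f 0) ⟨hf0V, hf0⟩
      exact (Submodule.mem_bot ℝ).mp hd
    rw [Subgroup.mem_bot, hft, hf00, transl_zero]


end SG
end

/-- Theorem 9: the extension `1 → Z(Γ) → Γ → Γ/Z(Γ) → 1` splits iff `Γ = Z(Γ) N`,
where `N = Z(Γ)^⊥` is the kernel of the action of `Γ` on `V = Span Z(Γ)`. -/
theorem stmt5 {n : ℕ} (Γ Z N : Subgroup (AffG n)) (hΓ : IsSpaceGroup Γ)
    (hZ : ∀ f : AffG n, f ∈ Z ↔ f ∈ Γ ∧ ∀ γ ∈ Γ, f * γ = γ * f)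
    (hN : ∀ f : AffG n, f ∈ N ↔ InKernel Γ (spanOf Z) f)
    (hdual : spanOf N = (spanOf Z)ᗮ) :
    (∃ Sg : Subgroup (AffG n), Sg ≤ Γ ∧ Z ⊔ Sg = Γ ∧ Z ⊓ Sg = ⊥) ↔ Z ⊔ N = Γ :=
  SG.stmt5' Γ Z N hΓ hZ hN hdual
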